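/- arXiv:1711.02880 — 2 statements merged into one kernel-verified Lean document; each statement's English description precedes it below -/
import Mathlib

section
/- Assume the assignment is nested: for all distinct i, j ∈ I, 𝒦_i ∩ 𝒦_j ≠ ∅ implies 𝒦_i ⊆ 𝒦_j or 𝒦_j ⊆ 𝒦_i; assume also that the sets 𝒦_i (i ∈ I) are pairwise distinct. Suppose G(λ) < ∞. Then ψ = ∏_{i∈I} (1 − ρ_{|i}), where ρ_{|i} = λ_i / ( M(𝒦_i) − ∑_{j : 𝒦_j ⊊ 𝒦_i} λ_j ). -/
open scoped BigOperators

noncomputable def Phi {I K : Type} [Fintype I] [DecidableEq I] [DecidableEq K]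
    (μ : K → ℝ) (Ka : I → Finset K) (x : I → ℕ) : ℝ :=
  if x = fun _ => 0 then 1
  else (∑ i ∈ (Finset.univ.filter (fun i => 0 < x i)).attach,
      Phi μ Ka (Function.update x i.1 (x i.1 - 1))) /
    (∑ k ∈ (Finset.univ.filter (fun i => 0 < x i)).biUnion Ka, μ k)
termination_by ∑ i, x i
decreasing_by
  have hi := i.2
  simp only [Finset.mem_filter] at hi
  apply Finset.sum_lt_sum
  · intro j _
    rcases eq_or_ne j i.1 with rfl | h
    · simp [Function.update_self]
    · rw [Function.update_of_ne h]
  · exact ⟨i.1, Finset.mem_univ i.1, by simp [Function.update_self]; omega⟩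

section aux
variable {I K : Type} [Fintype I] [DecidableEq I] [DecidableEq K]
variable (μ : K → ℝ) (Ka : I → Finset K)

lemma Phi_zero : Phi μ Ka (fun _ => 0) = 1 := by rw [Phi]; simp

lemma Phi_eq (x : I → ℕ) (hx : x ≠ fun _ => 0) :
    Phi μ Ka x = (∑ i ∈ Finset.univ.filter (fun i => 0 < x i),
        Phi μ Ka (Function.update x i (x i - 1))) /
      (∑ k ∈ (Finset.univ.filter (fun i => 0 < x i)).biUnion Ka, μ k) := by
  rw [Phi, if_neg hx]
  congr 1
  exact Finset.sum_attach _ (fun i => Phi μ Ka (Function.update x i (x i - 1)))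

lemma Phi_pos (hμ : ∀ k, 0 < μ k) (hKa : ∀ i, (Ka i).Nonempty) (x : I → ℕ) :
    0 < Phi μ Ka x := by
  have H : ∀ n (x : I → ℕ), ∑ i, x i = n → 0 < Phi μ Ka x := by
    intro n
    induction n using Nat.strong_induction_on with
    | _ n ih =>
    intro x hn
    rcases eq_or_ne x (fun _ => 0) with rfl | hx
    · rw [Phi_zero]; norm_num
    · have hne : (Finset.univ.filter (fun i => 0 < x i)).Nonempty := by
        by_contra h
        rw [Finset.not_nonempty_iff_eq_empty, Finset.filter_eq_empty_iff] at h
        exact hx (funext fun i => Nat.eq_zero_of_not_pos (h (Finset.mem_univ i)))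
      rw [Phi_eq μ Ka x hx]
      apply div_pos
      · apply Finset.sum_pos _ hne
        intro i hi
        simp only [Finset.mem_filter] at hi
        refine ih (∑ j, Function.update x i (x i - 1) j) ?_ _ rfl
        subst hn
        apply Finset.sum_lt_sum
        · intro j _
          rcases eq_or_ne j i with rfl | h
          · simp [Function.update_self]
          · rw [Function.update_of_ne h]
        · exact ⟨i, Finset.mem_univ i, by simp [Function.update_self]; omega⟩
      · apply Finset.sum_pos (fun k _ => hμ k)
        obtain ⟨i, hi⟩ := hne
        obtain ⟨k, hk⟩ := hKa i
        exact ⟨k, Finset.mem_biUnion.2 ⟨i, hi, hk⟩⟩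

  exact H _ x rfl

lemma Phi_add (hμ : ∀ k, 0 < μ k) (hKa : ∀ i, (Ka i).Nonempty)
    (x y : I → ℕ) (hdisj : ∀ i j, 0 < x i → 0 < y j → Disjoint (Ka i) (Ka j)) :
    Phi μ Ka (x + y) = Phi μ Ka x * Phi μ Ka y := by
  have H : ∀ n (x y : I → ℕ), (∑ i, (x i + y i)) = n →
      (∀ i j, 0 < x i → 0 < y j → Disjoint (Ka i) (Ka j)) →
      Phi μ Ka (x + y) = Phi μ Ka x * Phi μ Ka y := by
    intro n
    induction n using Nat.strong_induction_on with
    | _ n ih =>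
    intro x y hn hdisj
    rcases eq_or_ne x (fun _ => 0) with rfl | hx
    · have h0 : (fun _ => (0:ℕ) : I → ℕ) + y = y := by funext i; simp
      rw [h0, Phi_zero, one_mul]
    rcases eq_or_ne y (fun _ => 0) with rfl | hy
    · have h0 : x + (fun _ => (0:ℕ) : I → ℕ) = x := by funext i; simp
      rw [h0, Phi_zero, mul_one]
    have hsupp : ∀ i, ¬(0 < x i ∧ 0 < y i) := by
      rintro i ⟨h1, h2⟩
      have hd := hdisj i i h1 h2
      rw [disjoint_self] at hd
      exact (hKa i).ne_empty (by simpa using hd)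
    set A := Finset.univ.filter (fun i => 0 < x i) with hA
    set B := Finset.univ.filter (fun i => 0 < y i) with hB
    have hAne : A.Nonempty := by
      by_contra h
      rw [Finset.not_nonempty_iff_eq_empty, Finset.filter_eq_empty_iff] at h
      exact hx (funext fun i => Nat.eq_zero_of_not_pos (h (Finset.mem_univ i)))
    have hBne : B.Nonempty := by
      by_contra h
      rw [Finset.not_nonempty_iff_eq_empty, Finset.filter_eq_empty_iff] at h
      exact hy (funext fun i => Nat.eq_zero_of_not_pos (h (Finset.mem_univ i)))
    have hAB : Finset.univ.filter (fun i => 0 < (x + y) i) = A ∪ B := by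
      ext i
      simp only [hA, hB, Finset.mem_filter, Finset.mem_union, Finset.mem_univ, true_and,
        Pi.add_apply]
      omega
    have hABd : Disjoint A B := by
      rw [Finset.disjoint_left]
      intro i hiA hiB
      simp only [hA, hB, Finset.mem_filter, Finset.mem_univ, true_and] at hiA hiB
      exact hsupp i ⟨hiA, hiB⟩
    have hxy0 : x + y ≠ (fun _ => 0) := by
      intro h
      apply hx
      funext i
      have h2 := congrFun h i
      simp only [Pi.add_apply] at h2
      omega
    have hKd : Disjoint (A.biUnion Ka) (B.biUnion Ka) := by
      rw [Finset.disjoint_biUnion_left]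
      intro i hiA
      rw [Finset.disjoint_biUnion_right]
      intro j hjB
      simp only [hA, hB, Finset.mem_filter, Finset.mem_univ, true_and] at hiA hjB
      exact hdisj i j hiA hjB
    set MA := ∑ k ∈ A.biUnion Ka, μ k with hMA
    set MB := ∑ k ∈ B.biUnion Ka, μ k with hMB
    have hMApos : 0 < MA := by
      apply Finset.sum_pos (fun k _ => hμ k)
      obtain ⟨i, hi⟩ := hAne
      obtain ⟨k, hk⟩ := hKa i
      exact ⟨k, Finset.mem_biUnion.2 ⟨i, hi, hk⟩⟩
    have hMBpos : 0 < MB := by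
      apply Finset.sum_pos (fun k _ => hμ k)
      obtain ⟨i, hi⟩ := hBne
      obtain ⟨k, hk⟩ := hKa i
      exact ⟨k, Finset.mem_biUnion.2 ⟨i, hi, hk⟩⟩
    have hxpos : ∀ i ∈ A, 0 < x i := by
      intro i hi; simpa [hA] using hi
    have hypos : ∀ i ∈ B, 0 < y i := by
      intro i hi; simpa [hB] using hi
    have hstepA : ∀ i ∈ A, Function.update (x + y) i ((x + y) i - 1)
        = Function.update x i (x i - 1) + y := by
      intro i hi
      have hyi : y i = 0 := by
        by_contra h
        exact hsupp i ⟨hxpos i hi, Nat.pos_of_ne_zero h⟩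
      funext j
      rcases eq_or_ne j i with rfl | hj
      · simp [Function.update_self, Pi.add_apply, hyi]
      · simp [Function.update_of_ne hj, Pi.add_apply]
    have hstepB : ∀ i ∈ B, Function.update (x + y) i ((x + y) i - 1)
        = x + Function.update y i (y i - 1) := by
      intro i hi
      have hxi : x i = 0 := by
        by_contra h
        exact hsupp i ⟨Nat.pos_of_ne_zero h, hypos i hi⟩
      funext j
      rcases eq_or_ne j i with rfl | hj
      · simp [Function.update_self, Pi.add_apply, hxi]
      · simp [Function.update_of_ne hj, Pi.add_apply]
    have hihA : ∀ i ∈ A, Phi μ Ka (Function.update x i (x i - 1) + y)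
        = Phi μ Ka (Function.update x i (x i - 1)) * Phi μ Ka y := by
      intro i hi
      refine ih _ ?_ _ _ rfl ?_
      · subst hn
        apply Finset.sum_lt_sum
        · intro j _
          rcases eq_or_ne j i with rfl | h
          · simp only [Function.update_self]; omega
          · rw [Function.update_of_ne h]
        · exact ⟨i, Finset.mem_univ i, by
            simp only [Function.update_self]
            have := hxpos i hi; omega⟩
      · intro i' j' h1 h2
        apply hdisj i' j' _ h2
        rcases eq_or_ne i' i with rfl | h
        · exact hxpos i' hi
        · rwa [Function.update_of_ne h] at h1
    have hihB : ∀ i ∈ B, Phi μ Ka (x + Function.update y i (y i - 1))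
        = Phi μ Ka x * Phi μ Ka (Function.update y i (y i - 1)) := by
      intro i hi
      refine ih _ ?_ _ _ rfl ?_
      · subst hn
        apply Finset.sum_lt_sum
        · intro j _
          rcases eq_or_ne j i with rfl | h
          · simp only [Function.update_self]; omega
          · rw [Function.update_of_ne h]
        · exact ⟨i, Finset.mem_univ i, by
            simp only [Function.update_self]
            have := hypos i hi; omega⟩
      · intro i' j' h1 h2
        apply hdisj i' j' h1
        rcases eq_or_ne j' i with rfl | h
        · exact hypos j' hi
        · rwa [Function.update_of_ne h] at h2
    have hrecx : ∑ i ∈ A, Phi μ Ka (Function.update x i (x i - 1)) = Phi μ Ka x * MA := by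
      have := Phi_eq μ Ka x hx
      rw [← hA, ← hMA] at this
      field_simp at this
      linarith [this]
    have hrecy : ∑ i ∈ B, Phi μ Ka (Function.update y i (y i - 1)) = Phi μ Ka y * MB := by
      have := Phi_eq μ Ka y hy
      rw [← hB, ← hMB] at this
      field_simp at this
      linarith [this]
    have hbu : (A ∪ B).biUnion Ka = A.biUnion Ka ∪ B.biUnion Ka := by
      ext k
      simp only [Finset.mem_biUnion, Finset.mem_union]
      constructor
      · rintro ⟨i, hi | hi, hk⟩
        · exact Or.inl ⟨i, hi, hk⟩
        · exact Or.inr ⟨i, hi, hk⟩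
      · rintro (⟨i, hi, hk⟩ | ⟨i, hi, hk⟩)
        · exact ⟨i, Or.inl hi, hk⟩
        · exact ⟨i, Or.inr hi, hk⟩
    have hsA : ∑ i ∈ A, Phi μ Ka (Function.update (x + y) i ((x + y) i - 1))
        = Phi μ Ka x * MA * Phi μ Ka y := by
      rw [Finset.sum_congr rfl (fun i hi => by rw [hstepA i hi, hihA i hi]),
        ← Finset.sum_mul, hrecx]
    have hsB : ∑ i ∈ B, Phi μ Ka (Function.update (x + y) i ((x + y) i - 1))
        = Phi μ Ka x * (Phi μ Ka y * MB) := by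
      rw [Finset.sum_congr rfl (fun i hi => by rw [hstepB i hi, hihB i hi]),
        ← Finset.mul_sum, hrecy]
    rw [Phi_eq μ Ka (x + y) hxy0, hAB, Finset.sum_union hABd, hbu,
      Finset.sum_union hKd, ← hMA, ← hMB, hsA, hsB]
    field_simp
  exact H _ x y rfl hdisj

lemma Phi_root_step (hμ : ∀ k, 0 < μ k) (hKa : ∀ i, (Ka i).Nonempty)
    (r : I) (x : I → ℕ) (hxr : x r = 0)
    (hroot : ∀ j, 0 < x j → Ka j ⊆ Ka r) (n : ℕ) :
    (∑ k ∈ Ka r, μ k) * Phi μ Ka (Function.update x r (n + 1)) =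
      Phi μ Ka (Function.update x r n) +
      ∑ j ∈ Finset.univ.filter (fun j => 0 < x j),
        Phi μ Ka (Function.update (Function.update x j (x j - 1)) r (n + 1)) := by
  set y := Function.update x r (n + 1) with hy
  have hyr : y r = n + 1 := Function.update_self r (n + 1) x
  have hyo : ∀ i, i ≠ r → y i = x i := fun i hi => Function.update_of_ne hi _ _
  have hyne : y ≠ fun _ => 0 := by
    intro h
    have := congrFun h r
    rw [hyr] at this
    simp at this
  have hrm : r ∉ Finset.univ.filter (fun i => 0 < x i) := by simp [hxr]
  have hfil : Finset.univ.filter (fun i => 0 < y i)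
      = insert r (Finset.univ.filter (fun i => 0 < x i)) := by
    ext i
    simp only [Finset.mem_filter, Finset.mem_univ, true_and, Finset.mem_insert]
    rcases eq_or_ne i r with rfl | h
    · simp [hyr]
    · simp [hyo i h, h]
  have hbu : (insert r (Finset.univ.filter (fun i => 0 < x i))).biUnion Ka = Ka r := by
    apply Finset.Subset.antisymm
    · intro k hk
      rw [Finset.mem_biUnion] at hk
      obtain ⟨i, hi, hk⟩ := hk
      rcases Finset.mem_insert.1 hi with rfl | hi
      · exact hk
      · exact hroot i (by simpa using hi) hk
    · intro k hk
      exact Finset.mem_biUnion.2 ⟨r, Finset.mem_insert_self _ _, hk⟩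
  have hMpos : 0 < ∑ k ∈ Ka r, μ k := Finset.sum_pos (fun k _ => hμ k) (hKa r)
  have h1 : Function.update y r (y r - 1) = Function.update x r n := by
    funext i
    rcases eq_or_ne i r with rfl | h
    · simp [Function.update_self, hyr]
    · simp [Function.update_of_ne h, hyo i h]
  have h2 : ∀ j ∈ Finset.univ.filter (fun i => 0 < x i),
      Function.update y j (y j - 1)
        = Function.update (Function.update x j (x j - 1)) r (n + 1) := by
    intro j hj
    have hjx : 0 < x j := by simpa using hj
    have hjr : j ≠ r := by
      intro h
      rw [h, hxr] at hjx
      exact Nat.lt_irrefl 0 hjx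
    funext i
    rcases eq_or_ne i j with rfl | hij
    · rw [Function.update_self, Function.update_of_ne hjr, Function.update_self, hyo i hjr]
    · rcases eq_or_ne i r with rfl | hir
      · rw [Function.update_of_ne (Ne.symm hjr), hyr, Function.update_self]
      · rw [Function.update_of_ne hij, Function.update_of_ne hir,
          Function.update_of_ne hij, hyo i hir]
  have hnum : ∑ j ∈ Finset.univ.filter (fun i => 0 < x i),
      Phi μ Ka (Function.update y j (y j - 1))
      = ∑ j ∈ Finset.univ.filter (fun j => 0 < x j),
        Phi μ Ka (Function.update (Function.update x j (x j - 1)) r (n + 1)) :=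
    Finset.sum_congr rfl (fun j hj => by rw [h2 j hj])
  rw [Phi_eq μ Ka y hyne, hfil, hbu, Finset.sum_insert hrm, h1, hnum]
  field_simp

lemma prod_pow_update (lam : I → ℝ) (x : I → ℕ) (j : I) (c : ℕ) :
    ∏ i, lam i ^ (Function.update x j c) i
      = lam j ^ c * ∏ i ∈ Finset.univ.erase j, lam i ^ x i := by
  have h : (fun i => lam i ^ (Function.update x j c) i)
      = Function.update (fun i => lam i ^ x i) j (lam j ^ c) := by
    funext i
    rcases eq_or_ne i j with rfl | h
    · simp [Function.update_self]
    · simp [Function.update_of_ne h]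
  rw [h, Finset.prod_update_of_mem (Finset.mem_univ j), Finset.erase_eq]

lemma prod_pow_split (lam : I → ℝ) (x : I → ℕ) (j : I) :
    ∏ i, lam i ^ x i = lam j ^ x j * ∏ i ∈ Finset.univ.erase j, lam i ^ x i :=
  (Finset.mul_prod_erase Finset.univ _ (Finset.mem_univ j)).symm

noncomputable def GS (lam : I → ℝ) (S : Finset I) : ℝ :=
  ∑' x : {x : I → ℕ // ∀ i ∉ S, x i = 0}, Phi μ Ka x.1 * ∏ i, lam i ^ x.1 i

lemma GS_empty (lam : I → ℝ) : GS μ Ka lam ∅ = 1 := by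
  have hu : ∀ z : {x : I → ℕ // ∀ i ∉ (∅ : Finset I), x i = 0},
      z = ⟨fun _ => 0, fun i _ => rfl⟩ := by
    rintro ⟨x, hx⟩
    ext i
    exact hx i (Finset.notMem_empty i)
  rw [GS, tsum_eq_single ⟨fun _ => 0, fun i _ => rfl⟩ (fun b hb => absurd (hu b) hb)]
  simp [Phi_zero]

lemma tsum_mul_tsum_nonneg {α β : Type} (f : α → ℝ) (g : β → ℝ)
    (hf : Summable f) (hg : Summable g) (hf0 : ∀ a, 0 ≤ f a) (hg0 : ∀ b, 0 ≤ g b) :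
    ∑' p : α × β, f p.1 * g p.2 = (∑' a, f a) * ∑' b, g b := by
  rw [Summable.tsum_prod' (hf.mul_of_nonneg hg hf0 hg0) (fun a => (hg.mul_left (f a)))]
  calc ∑' a, ∑' b, f a * g b = ∑' a, f a * ∑' b, g b :=
        tsum_congr fun a => tsum_mul_left
    _ = _ := tsum_mul_right

lemma GS_mul (hμ : ∀ k, 0 < μ k) (hKa : ∀ i, (Ka i).Nonempty) (lam : I → ℝ)
    (hlam : ∀ i, 0 ≤ lam i)
    (hG : Summable (fun x : I → ℕ => Phi μ Ka x * ∏ i, lam i ^ x i))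
    (S1 S2 : Finset I) (hd : Disjoint S1 S2)
    (hdisj : ∀ i ∈ S1, ∀ j ∈ S2, Disjoint (Ka i) (Ka j)) :
    GS μ Ka lam (S1 ∪ S2) = GS μ Ka lam S1 * GS μ Ka lam S2 := by
  classical
  set F := fun x : I → ℕ => Phi μ Ka x * ∏ i, lam i ^ x i with hF
  have hFnn : ∀ x, 0 ≤ F x := fun x => mul_nonneg (Phi_pos μ Ka hμ hKa x).le
    (Finset.prod_nonneg fun i _ => pow_nonneg (hlam i) _)
  have h1 : Summable (fun a : {x : I → ℕ // ∀ i ∉ S1, x i = 0} => F a.1) :=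
    hG.comp_injective Subtype.val_injective
  have h2 : Summable (fun a : {x : I → ℕ // ∀ i ∉ S2, x i = 0} => F a.1) :=
    hG.comp_injective Subtype.val_injective
  have hS12 : ∀ i, i ∈ S1 → i ∉ S2 := fun i hi => Finset.disjoint_left.mp hd hi
  let e : {x : I → ℕ // ∀ i ∉ S1, x i = 0} × {x : I → ℕ // ∀ i ∉ S2, x i = 0}
      ≃ {x : I → ℕ // ∀ i ∉ S1 ∪ S2, x i = 0} :=
    { toFun := fun p => ⟨p.1.1 + p.2.1, fun i hi => by
        rw [Finset.mem_union, not_or] at hi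
        simp [Pi.add_apply, p.1.2 i hi.1, p.2.2 i hi.2]⟩
      invFun := fun z => (⟨fun i => if i ∈ S1 then z.1 i else 0, fun i hi => if_neg hi⟩,
        ⟨fun i => if i ∈ S2 then z.1 i else 0, fun i hi => if_neg hi⟩)
      left_inv := fun p => by
        obtain ⟨⟨a, ha⟩, ⟨b, hb⟩⟩ := p
        simp only [Prod.mk.injEq, Subtype.mk.injEq]
        constructor
        · funext i
          by_cases hi : i ∈ S1
          · simp [hi, Pi.add_apply, hb i (hS12 i hi)]
          · simp [hi, ha i hi]
        · funext i
          by_cases hi : i ∈ S2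
          · simp [hi, Pi.add_apply, ha i (fun h => hS12 i h hi)]
          · simp [hi, hb i hi]
      right_inv := fun z => by
        ext i
        simp only [Pi.add_apply]
        by_cases h1i : i ∈ S1
        · simp [h1i, hS12 i h1i]
        · by_cases h2i : i ∈ S2
          · simp [h1i, h2i]
          · simp [h1i, h2i, z.2 i (by rw [Finset.mem_union]; tauto)] }
  have hterm : ∀ p : {x : I → ℕ // ∀ i ∉ S1, x i = 0} × {x : I → ℕ // ∀ i ∉ S2, x i = 0},
      F ((e p).1) = F p.1.1 * F p.2.1 := by
    intro p
    show F (p.1.1 + p.2.1) = _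
    have hdp : ∀ i j, 0 < p.1.1 i → 0 < p.2.1 j → Disjoint (Ka i) (Ka j) := by
      intro i j hi hj
      refine hdisj i ?_ j ?_
      · by_contra h
        rw [p.1.2 i h] at hi
        exact lt_irrefl 0 hi
      · by_contra h
        rw [p.2.2 j h] at hj
        exact lt_irrefl 0 hj
    simp only [hF]
    rw [Phi_add μ Ka hμ hKa _ _ hdp]
    have : ∏ i, lam i ^ (p.1.1 + p.2.1) i = (∏ i, lam i ^ p.1.1 i) * ∏ i, lam i ^ p.2.1 i := by
      rw [← Finset.prod_mul_distrib]
      exact Finset.prod_congr rfl fun i _ => by rw [Pi.add_apply, pow_add]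
    rw [this]
    ring
  calc GS μ Ka lam (S1 ∪ S2) = ∑' p, F ((e p).1) := (e.tsum_eq _).symm
    _ = ∑' p : {x : I → ℕ // ∀ i ∉ S1, x i = 0} × {x : I → ℕ // ∀ i ∉ S2, x i = 0},
        F p.1.1 * F p.2.1 := tsum_congr hterm
    _ = GS μ Ka lam S1 * GS μ Ka lam S2 :=
        tsum_mul_tsum_nonneg _ _ h1 h2 (fun a => hFnn a.1) (fun b => hFnn b.1)

set_option maxHeartbeats 2000000 in
lemma GS_insert (hμ : ∀ k, 0 < μ k) (hKa : ∀ i, (Ka i).Nonempty) (lam : I → ℝ)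
    (hlam : ∀ i, 0 ≤ lam i)
    (hG : Summable (fun x : I → ℕ => Phi μ Ka x * ∏ i, lam i ^ x i))
    (S : Finset I) (r : I) (hr : r ∈ S)
    (hroot : ∀ j ∈ S.erase r, Ka j ⊂ Ka r) :
    GS μ Ka lam S = GS μ Ka lam (S.erase r)
        * (1 - lam r / ((∑ k ∈ Ka r, μ k) - ∑ j ∈ S.erase r, lam j))⁻¹
    ∧ 0 ≤ lam r / ((∑ k ∈ Ka r, μ k) - ∑ j ∈ S.erase r, lam j)
    ∧ lam r / ((∑ k ∈ Ka r, μ k) - ∑ j ∈ S.erase r, lam j) < 1 := by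
  classical
  set T := S.erase r with hT
  have hrT : r ∉ T := Finset.notMem_erase r S
  set F := fun x : I → ℕ => Phi μ Ka x * ∏ i, lam i ^ x i with hF
  set Mr := ∑ k ∈ Ka r, μ k with hMr
  set L := ∑ j ∈ T, lam j with hL
  set f : ℕ → {x : I → ℕ // ∀ i ∉ T, x i = 0} → ℝ :=
    fun n x => Phi μ Ka (Function.update x.1 r n) * ∏ i, lam i ^ x.1 i with hf
  set g : ℕ → ℝ := fun n => ∑' x, f n x with hg
  have h_xr : ∀ x : {x : I → ℕ // ∀ i ∉ T, x i = 0}, x.1 r = 0 := fun x => x.2 r hrT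
  have hprodu : ∀ (x : {x : I → ℕ // ∀ i ∉ T, x i = 0}) (n : ℕ),
      ∏ i, lam i ^ (Function.update x.1 r n) i = lam r ^ n * ∏ i, lam i ^ x.1 i := by
    intro x n
    rw [prod_pow_update, prod_pow_split lam x.1 r, h_xr x, pow_zero, one_mul]
  have hFu : ∀ (x : {x : I → ℕ // ∀ i ∉ T, x i = 0}) (n : ℕ),
      F (Function.update x.1 r n) = f n x * lam r ^ n := by
    intro x n
    simp only [hF, hf]
    rw [hprodu]
    ring
  let e : ℕ × {x : I → ℕ // ∀ i ∉ T, x i = 0} ≃ {x : I → ℕ // ∀ i ∉ S, x i = 0} :=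
    { toFun := fun p => ⟨Function.update p.2.1 r p.1, fun i hi => by
        have hir : i ≠ r := fun h => hi (h ▸ hr)
        rw [Function.update_of_ne hir]
        exact p.2.2 i (fun hiT => hi (Finset.mem_of_mem_erase hiT))⟩
      invFun := fun z => (z.1 r, ⟨Function.update z.1 r 0, fun i hi => by
        rcases eq_or_ne i r with rfl | hir
        · exact Function.update_self i 0 z.1
        · rw [Function.update_of_ne hir]
          exact z.2 i (fun hiS => hi (Finset.mem_erase.2 ⟨hir, hiS⟩))⟩)
      left_inv := fun p => by
        obtain ⟨n, x, hx⟩ := p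
        simp only [Prod.mk.injEq, Subtype.mk.injEq]
        constructor
        · exact Function.update_self r n x
        · funext i
          rcases eq_or_ne i r with rfl | hir
          · rw [Function.update_self]
            exact (hx i hrT).symm
          · rw [Function.update_of_ne hir, Function.update_of_ne hir]
      right_inv := fun z => by
        ext i
        show Function.update (Function.update z.1 r 0) r (z.1 r) i = z.1 i
        rcases eq_or_ne i r with rfl | hir
        · rw [Function.update_self]
        · rw [Function.update_of_ne hir, Function.update_of_ne hir] }
  have hFS : Summable (fun z : {x : I → ℕ // ∀ i ∉ S, x i = 0} => F z.1) :=
    hG.comp_injective Subtype.val_injective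
  have hsum2 : Summable (fun p : ℕ × {x : I → ℕ // ∀ i ∉ T, x i = 0} => F ((e p).1)) :=
    hFS.comp_injective e.injective
  have hsum2' : Summable (fun p : ℕ × {x : I → ℕ // ∀ i ∉ T, x i = 0}
      => f p.1 p.2 * lam r ^ p.1) :=
    hsum2.congr (fun p => hFu p.2 p.1)
  have hfib : ∀ n, Summable (fun x : {x : I → ℕ // ∀ i ∉ T, x i = 0} => f n x * lam r ^ n) :=
    fun n => hsum2'.prod_factor n
  have hGSf : GS μ Ka lam S = ∑' n : ℕ, g n * lam r ^ n := by
    rw [GS, ← e.tsum_eq]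
    calc ∑' p : ℕ × {x : I → ℕ // ∀ i ∉ T, x i = 0}, F ((e p).1)
        = ∑' p : ℕ × {x : I → ℕ // ∀ i ∉ T, x i = 0}, f p.1 p.2 * lam r ^ p.1 :=
          tsum_congr fun p => hFu p.2 p.1
      _ = ∑' n, ∑' x, f n x * lam r ^ n := Summable.tsum_prod' hsum2' hfib
      _ = ∑' n, g n * lam r ^ n := tsum_congr fun n => tsum_mul_right
  have hgsum : Summable (fun n => g n * lam r ^ n) :=
    ((hsum2'.hasSum.prod_fiberwise (fun n => (hfib n).hasSum)).summable).congr
      (fun n => tsum_mul_right)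
  have hupd0 : ∀ x : {x : I → ℕ // ∀ i ∉ T, x i = 0}, Function.update x.1 r 0 = x.1 := by
    intro x
    funext i
    rcases eq_or_ne i r with rfl | h
    · rw [Function.update_self]
      exact (h_xr x).symm
    · rw [Function.update_of_ne h]
  have hg0 : g 0 = GS μ Ka lam T := by
    rw [hg, GS]
    exact tsum_congr fun x => by rw [hf]; simp only; rw [hupd0 x]
  by_cases hc : lam r = 0
  · have h1 : GS μ Ka lam S = g 0 := by
      rw [hGSf, tsum_eq_single 0 (fun n hn => by rw [hc, zero_pow hn, mul_zero])]
      rw [pow_zero, mul_one]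
    rw [hc, zero_div]
    refine ⟨?_, le_refl 0, zero_lt_one⟩
    rw [h1, hg0]
    norm_num
  have hlr : 0 < lam r := (hlam r).lt_of_ne (Ne.symm hc)
  have hfn : ∀ n, Summable (f n) := by
    intro n
    refine ((hfib n).mul_right ((lam r ^ n)⁻¹)).congr fun x => ?_
    field_simp
  have hfnn : ∀ n x, 0 ≤ f n x := by
    intro n x
    exact mul_nonneg (Phi_pos μ Ka hμ hKa _).le
      (Finset.prod_nonneg fun i _ => pow_nonneg (hlam i) _)
  have hgpos : ∀ n, 0 < g n := by
    intro n
    refine Summable.tsum_pos (hfn n) (hfnn n) ⟨fun _ => 0, fun i _ => rfl⟩ ?_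
    simp only [hf, pow_zero, Finset.prod_const_one, mul_one]
    exact Phi_pos μ Ka hμ hKa _
  have key : ∀ n, (Mr - L) * g (n + 1) = g n := by
    intro n
    set v : I → {x : I → ℕ // ∀ i ∉ T, x i = 0} → ℝ := fun j x => if 0 < x.1 j then
      Phi μ Ka (Function.update (Function.update x.1 j (x.1 j - 1)) r (n + 1))
        * ∏ i, lam i ^ x.1 i else 0 with hv
    have hpoint : ∀ x : {x : I → ℕ // ∀ i ∉ T, x i = 0},
        Mr * f (n + 1) x = f n x + ∑ j ∈ T, v j x := by
      intro x
      have hsub : ∀ j, 0 < x.1 j → Ka j ⊆ Ka r := by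
        intro j hj
        refine (hroot j ?_).subset
        by_contra h
        rw [x.2 j h] at hj
        exact lt_irrefl 0 hj
      have hstep := Phi_root_step μ Ka hμ hKa r x.1 (h_xr x) hsub n
      have hTfil : T.filter (fun j => 0 < x.1 j)
          = Finset.univ.filter (fun j => 0 < x.1 j) := by
        ext j
        simp only [Finset.mem_filter, Finset.mem_univ, true_and, and_iff_right_iff_imp]
        intro hj
        by_contra h
        rw [x.2 j h] at hj
        exact lt_irrefl 0 hj
      have hPn : ∑ j ∈ T, v j x
          = (∑ j ∈ Finset.univ.filter (fun j => 0 < x.1 j),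
              Phi μ Ka (Function.update (Function.update x.1 j (x.1 j - 1)) r (n + 1)))
            * ∏ i, lam i ^ x.1 i := by
        rw [Finset.sum_mul, ← hTfil, Finset.sum_filter]
      calc Mr * f (n + 1) x
          = (Mr * Phi μ Ka (Function.update x.1 r (n + 1))) * ∏ i, lam i ^ x.1 i := by
            rw [hf]; ring
        _ = (Phi μ Ka (Function.update x.1 r n)
              + ∑ j ∈ Finset.univ.filter (fun j => 0 < x.1 j),
                Phi μ Ka (Function.update (Function.update x.1 j (x.1 j - 1)) r (n + 1)))
            * ∏ i, lam i ^ x.1 i := by rw [hstep]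
        _ = f n x + ∑ j ∈ T, v j x := by rw [hPn, hf]; ring
    have hvsum : ∀ j ∈ T, Summable (v j) ∧ ∑' x, v j x = lam j * g (n + 1) := by
      intro j hj
      have hjr : j ≠ r := Finset.ne_of_mem_erase hj
      let σ : {x : I → ℕ // ∀ i ∉ T, x i = 0} → {x : I → ℕ // ∀ i ∉ T, x i = 0} :=
        fun y => ⟨Function.update y.1 j (y.1 j + 1), fun i hi => by
          rw [Function.update_of_ne (fun h : i = j => hi (by rw [h]; exact hj))]
          exact y.2 i hi⟩
      have hσinj : Function.Injective σ := by
        intro a b hab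
        have h1 := congrArg Subtype.val hab
        ext i
        have h2 := congrFun h1 i
        rcases eq_or_ne i j with rfl | hij
        · simp only [σ, Function.update_self] at h2
          omega
        · simpa [σ, Function.update_of_ne hij] using h2
      have hval : ∀ y, v j (σ y) = lam j * f (n + 1) y := by
        intro y
        have hback : Function.update (σ y).1 j ((σ y).1 j - 1) = y.1 := by
          funext i
          rcases eq_or_ne i j with rfl | hij
          · simp [σ, Function.update_self]
          · simp [σ, Function.update_of_ne hij]
        have hpos : 0 < (σ y).1 j := by simp [σ, Function.update_self]
        have hpr : ∏ i, lam i ^ (σ y).1 i = lam j * ∏ i, lam i ^ y.1 i := by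
          show ∏ i, lam i ^ (Function.update y.1 j (y.1 j + 1)) i = _
          rw [prod_pow_update, prod_pow_split lam y.1 j, pow_succ]
          ring
        rw [hv]
        simp only
        rw [if_pos hpos, hback, hpr, hf]
        ring
      have hrange : ∀ x, x ∉ Set.range σ → v j x = 0 := by
        intro x hx
        rw [hv]
        simp only
        rw [if_neg]
        intro hpos
        apply hx
        refine ⟨⟨Function.update x.1 j (x.1 j - 1), fun i hi => by
          rw [Function.update_of_ne (fun h : i = j => hi (by rw [h]; exact hj))]
          exact x.2 i hi⟩, ?_⟩
        ext i
        rcases eq_or_ne i j with rfl | hij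
        · simp only [σ, Function.update_self]
          omega
        · simp [σ, Function.update_of_ne hij]
      have hsummm : Summable (v j) := by
        rw [← hσinj.summable_iff hrange]
        exact ((hfn (n + 1)).mul_left (lam j)).congr (fun y => (hval y).symm)
      refine ⟨hsummm, ?_⟩
      rw [← hσinj.tsum_eq (Function.support_subset_iff.2
        fun x hx => by_contra fun hr => hx (hrange x hr))]
      calc ∑' y, v j (σ y) = ∑' y, lam j * f (n + 1) y := tsum_congr hval
        _ = lam j * g (n + 1) := tsum_mul_left
    have hMg : Mr * g (n + 1) = g n + L * g (n + 1) := by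
      calc Mr * g (n + 1) = ∑' x, Mr * f (n + 1) x := tsum_mul_left.symm
        _ = ∑' x, (f n x + ∑ j ∈ T, v j x) := tsum_congr hpoint
        _ = g n + ∑' x, ∑ j ∈ T, v j x := Summable.tsum_add (hfn n)
              (summable_sum fun j hj => (hvsum j hj).1)
        _ = g n + ∑ j ∈ T, ∑' x, v j x := by
              rw [Summable.tsum_finsetSum fun j hj => (hvsum j hj).1]
        _ = g n + ∑ j ∈ T, lam j * g (n + 1) := by
              rw [Finset.sum_congr rfl fun j hj => (hvsum j hj).2]
        _ = g n + L * g (n + 1) := by rw [← Finset.sum_mul]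
    linarith [hMg]
  have hMLpos : 0 < Mr - L := by
    have h0 := key 0
    nlinarith [hgpos 0, hgpos 1]
  have hgeom : ∀ n, g n = g 0 * ((Mr - L)⁻¹) ^ n := by
    intro n
    induction n with
    | zero => simp
    | succ m ihm =>
      have hk := key m
      have h2 : g (m + 1) = g m * (Mr - L)⁻¹ := by
        field_simp
        linarith [hk]
      rw [h2, ihm, pow_succ, mul_assoc]
  set q := lam r / (Mr - L) with hq
  have hq0 : 0 ≤ q := div_nonneg (hlam r) hMLpos.le
  have hterm2 : ∀ n, g n * lam r ^ n = g 0 * q ^ n := by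
    intro n
    rw [hgeom n, hq, div_eq_mul_inv, mul_pow]
    ring
  have hsq : Summable (fun n : ℕ => q ^ n) :=
    (summable_mul_left_iff (hgpos 0).ne').1 (hgsum.congr hterm2)
  have hqlt : q < 1 := by
    have h3 := summable_geometric_iff_norm_lt_one.mp hsq
    rwa [Real.norm_eq_abs, abs_of_nonneg hq0] at h3
  refine ⟨?_, hq0, hqlt⟩
  rw [hGSf]
  calc ∑' n, g n * lam r ^ n = ∑' n, g 0 * q ^ n := tsum_congr hterm2
    _ = g 0 * ∑' n, q ^ n := tsum_mul_left
    _ = GS μ Ka lam T * (1 - q)⁻¹ := by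
        rw [hg0, tsum_geometric_of_lt_one hq0 hqlt]

noncomputable def rho (lam : I → ℝ) (S : Finset I) (i : I) : ℝ :=
  lam i / ((∑ k ∈ Ka i, μ k) - ∑ j ∈ S.filter (fun j => Ka j ⊂ Ka i), lam j)

lemma GS_formula (hμ : ∀ k, 0 < μ k) (hKa : ∀ i, (Ka i).Nonempty) (lam : I → ℝ)
    (hlam : ∀ i, 0 ≤ lam i)
    (hnested : ∀ i j : I, i ≠ j → (Ka i ∩ Ka j).Nonempty → Ka i ⊆ Ka j ∨ Ka j ⊆ Ka i)
    (hdistinct : ∀ i j : I, Ka i = Ka j → i = j)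
    (hG : Summable (fun x : I → ℕ => Phi μ Ka x * ∏ i, lam i ^ x i)) :
    ∀ S : Finset I, GS μ Ka lam S = ∏ i ∈ S, (1 - rho μ Ka lam S i)⁻¹
      ∧ ∀ i ∈ S, 0 ≤ rho μ Ka lam S i ∧ rho μ Ka lam S i < 1 := by
  classical
  have H : ∀ n (S : Finset I), S.card = n →
      (GS μ Ka lam S = ∏ i ∈ S, (1 - rho μ Ka lam S i)⁻¹
        ∧ ∀ i ∈ S, 0 ≤ rho μ Ka lam S i ∧ rho μ Ka lam S i < 1) := by
    intro n
    induction n using Nat.strong_induction_on with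
    | _ n ih =>
    intro S hcard
    rcases Finset.eq_empty_or_nonempty S with rfl | hSne
    · exact ⟨by rw [GS_empty]; simp, fun i hi => absurd hi (Finset.notMem_empty i)⟩
    obtain ⟨r, hrS, hrmax⟩ := Finset.exists_max_image S (fun i => (Ka i).card) hSne
    by_cases hall : ∀ j ∈ S.erase r, Ka j ⊂ Ka r
    · -- case A: r is the unique root
      obtain ⟨hGSeq, hq0, hq1⟩ := GS_insert μ Ka hμ hKa lam hlam hG S r hrS hall
      have hcT : (S.erase r).card < n := by
        rw [← hcard]
        exact Finset.card_erase_lt_of_mem hrS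
      obtain ⟨hGT, hsideT⟩ := ih (S.erase r).card hcT (S.erase r) rfl
      have htrans : ∀ i ∈ S.erase r, rho μ Ka lam S i = rho μ Ka lam (S.erase r) i := by
        intro i hi
        unfold rho
        congr 2
        apply Finset.sum_congr _ (fun _ _ => rfl)
        ext j
        simp only [Finset.mem_filter, Finset.mem_erase]
        constructor
        · rintro ⟨hjS, hsub⟩
          refine ⟨⟨?_, hjS⟩, hsub⟩
          rintro rfl
          exact hsub.not_subset (hall i hi).subset
        · rintro ⟨⟨hjr, hjS⟩, hsub⟩
          exact ⟨hjS, hsub⟩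
      have hfr : S.filter (fun j => Ka j ⊂ Ka r) = S.erase r := by
        ext j
        simp only [Finset.mem_filter, Finset.mem_erase]
        constructor
        · rintro ⟨hjS, hsub⟩
          refine ⟨fun h => ?_, hjS⟩
          rw [h, Finset.ssubset_def] at hsub
          exact hsub.2 hsub.1
        · rintro ⟨hjr, hjS⟩
          exact ⟨hjS, hall j (Finset.mem_erase.2 ⟨hjr, hjS⟩)⟩
      constructor
      · rw [hGSeq, hGT, ← Finset.prod_erase_mul S _ hrS]
        congr 1
        · exact Finset.prod_congr rfl fun i hi => by rw [← htrans i hi]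
        · unfold rho
          rw [hfr]
      · intro i hi
        rcases eq_or_ne i r with rfl | hir
        · have hrr : rho μ Ka lam S i
              = lam i / ((∑ k ∈ Ka i, μ k) - ∑ j ∈ S.erase i, lam j) := by
            unfold rho
            rw [hfr]
          rw [hrr]
          exact ⟨hq0, hq1⟩
        · have hiT : i ∈ S.erase r := Finset.mem_erase.2 ⟨hir, hi⟩
          rw [htrans i hiT]
          exact hsideT i hiT
    · -- case B: split into two disjoint groups
      push_neg at hall
      obtain ⟨w, hwT, hwnsub⟩ := hall
      set S1 := S.filter (fun j => Ka j ⊆ Ka r) with hS1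
      set S2 := S.filter (fun j => ¬ Ka j ⊆ Ka r) with hS2
      have hrS1 : r ∈ S1 := Finset.mem_filter.2 ⟨hrS, Finset.Subset.refl _⟩
      have hdisjKr : ∀ j ∈ S2, Disjoint (Ka j) (Ka r) := by
        intro j hj
        obtain ⟨hjS, hjn⟩ := Finset.mem_filter.1 hj
        have hjr : j ≠ r := fun h => hjn (h ▸ Finset.Subset.refl _)
        by_contra hd
        rw [Finset.not_disjoint_iff_nonempty_inter] at hd
        rcases hnested j r hjr hd with h | h
        · exact hjn h
        · exact hjr (hdistinct j r (Finset.eq_of_subset_of_card_le h (hrmax j hjS)).symm)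
      have hwS2 : w ∈ S2 := by
        refine Finset.mem_filter.2 ⟨Finset.mem_of_mem_erase hwT, fun hs => ?_⟩
        apply hwnsub
        rw [Finset.ssubset_def]
        refine ⟨hs, fun h2 => ?_⟩
        exact (Finset.mem_erase.1 hwT).1
          (hdistinct w r (Finset.Subset.antisymm hs h2))
      have hunion : S1 ∪ S2 = S := Finset.filter_union_filter_not_eq _ S
      have hdisj12 : Disjoint S1 S2 := Finset.disjoint_filter_filter_not S S _
      have hdisjK : ∀ i ∈ S1, ∀ j ∈ S2, Disjoint (Ka i) (Ka j) := by
        intro i hi j hj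
        exact Finset.disjoint_of_subset_left (Finset.mem_filter.1 hi).2
          (hdisjKr j hj).symm
      have hwnS1 : w ∉ S1 := Finset.disjoint_right.1 hdisj12 hwS2
      have hrnS2 : r ∉ S2 := Finset.disjoint_left.1 hdisj12 hrS1
      have hcard1 : S1.card < n := by
        rw [← hcard]
        exact Finset.card_lt_card ((Finset.ssubset_iff_of_subset
          (Finset.filter_subset _ _)).2 ⟨w, Finset.mem_of_mem_erase hwT, hwnS1⟩)
      have hcard2 : S2.card < n := by
        rw [← hcard]
        exact Finset.card_lt_card ((Finset.ssubset_iff_of_subset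
          (Finset.filter_subset _ _)).2 ⟨r, hrS, hrnS2⟩)
      obtain ⟨hG1, hside1⟩ := ih S1.card hcard1 S1 rfl
      obtain ⟨hG2, hside2⟩ := ih S2.card hcard2 S2 rfl
      have htr1 : ∀ i ∈ S1, rho μ Ka lam S i = rho μ Ka lam S1 i := by
        intro i hi
        unfold rho
        congr 2
        apply Finset.sum_congr _ (fun _ _ => rfl)
        ext j
        simp only [Finset.mem_filter, hS1]
        constructor
        · rintro ⟨hjS, hsub⟩
          exact ⟨⟨hjS, hsub.subset.trans (Finset.mem_filter.1 hi).2⟩, hsub⟩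
        · rintro ⟨⟨hjS, _⟩, hsub⟩
          exact ⟨hjS, hsub⟩
      have htr2 : ∀ i ∈ S2, rho μ Ka lam S i = rho μ Ka lam S2 i := by
        intro i hi
        unfold rho
        congr 2
        apply Finset.sum_congr _ (fun _ _ => rfl)
        ext j
        simp only [Finset.mem_filter, hS2]
        constructor
        · rintro ⟨hjS, hsub⟩
          refine ⟨⟨hjS, fun hjr => ?_⟩, hsub⟩
          obtain ⟨k, hk⟩ := hKa j
          exact Finset.disjoint_left.1 (hdisjKr i hi) (hsub.subset hk) (hjr hk)
        · rintro ⟨⟨hjS, _⟩, hsub⟩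
          exact ⟨hjS, hsub⟩
      have hGmul : GS μ Ka lam S = GS μ Ka lam S1 * GS μ Ka lam S2 := by
        conv_lhs => rw [← hunion]
        exact GS_mul μ Ka hμ hKa lam hlam hG S1 S2 hdisj12 hdisjK
      constructor
      · rw [hGmul, hG1, hG2]
        calc (∏ i ∈ S1, (1 - rho μ Ka lam S1 i)⁻¹) * ∏ i ∈ S2, (1 - rho μ Ka lam S2 i)⁻¹
            = (∏ i ∈ S1, (1 - rho μ Ka lam S i)⁻¹) * ∏ i ∈ S2, (1 - rho μ Ka lam S i)⁻¹ := by
              rw [Finset.prod_congr rfl fun i hi => by rw [← htr1 i hi],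
                Finset.prod_congr rfl (fun i hi => by rw [← htr2 i hi] :
                  ∀ i ∈ S2, (1 - rho μ Ka lam S2 i)⁻¹ = (1 - rho μ Ka lam S i)⁻¹)]
          _ = ∏ i ∈ S1 ∪ S2, (1 - rho μ Ka lam S i)⁻¹ := (Finset.prod_union hdisj12).symm
          _ = ∏ i ∈ S, (1 - rho μ Ka lam S i)⁻¹ := by rw [hunion]
      · intro i hi
        rw [← hunion, Finset.mem_union] at hi
        rcases hi with hi | hi
        · rw [htr1 i hi]
          exact hside1 i hi
        · rw [htr2 i hi]
          exact hside2 i hi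
  exact fun S => H S.card S rfl

end aux

/-- The normalization series `G(λ) = ∑_{x∈ℕ^I} Φ(x) λ^x` (as a real tsum). -/
noncomputable def Gf {I K : Type} [Fintype I] [DecidableEq I] [DecidableEq K]
    (μ : K → ℝ) (Ka : I → Finset K) (lam : I → ℝ) : ℝ :=
  ∑' x : I → ℕ, Phi μ Ka x * ∏ i, lam i ^ x i

/-- For a nested assignment (intersecting assigned server sets are
comparable, and the sets `𝒦_i` are pairwise distinct), if `G(λ) < ∞` then
`ψ = ∏_i (1 − ρ_{|i})` where `ρ_{|i} = λ_i / (M(𝒦_i) − ∑_{j : 𝒦_j ⊊ 𝒦_i} λ_j)`. -/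
theorem nested_pool_empty_probability
    {I K : Type} [Fintype I] [DecidableEq I] [Nonempty I]
    [Fintype K] [DecidableEq K] [Nonempty K]
    (μ : K → ℝ) (hμ : ∀ k, 0 < μ k)
    (Ka : I → Finset K) (hKa : ∀ i, (Ka i).Nonempty) (hcov : ∀ k, ∃ i, k ∈ Ka i)
    (lam : I → ℝ) (hlam : ∀ i, 0 ≤ lam i)
    (hnested : ∀ i j : I, i ≠ j → (Ka i ∩ Ka j).Nonempty → Ka i ⊆ Ka j ∨ Ka j ⊆ Ka i)
    (hdistinct : ∀ i j : I, Ka i = Ka j → i = j)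
    (hG : Summable (fun x : I → ℕ => Phi μ Ka x * ∏ i, lam i ^ x i)) :
    (Gf μ Ka lam)⁻¹ =
      ∏ i, (1 - lam i /
        ((∑ k ∈ Ka i, μ k) -
          ∑ j ∈ Finset.univ.filter (fun j => Ka j ⊂ Ka i), lam j)) := by
  classical
  obtain ⟨hGval, hside⟩ :=
    GS_formula μ Ka hμ hKa lam hlam hnested hdistinct hG Finset.univ
  have hGf : Gf μ Ka lam = GS μ Ka lam Finset.univ := by
    rw [Gf, GS]
    exact ((Equiv.subtypeUnivEquiv
      (fun x i hi => absurd (Finset.mem_univ i) hi)).tsum_eq _).symm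
  rw [hGf, hGval, ← Finset.prod_inv_distrib]
  simp only [inv_inv]
  exact Finset.prod_congr rfl fun i _ => by unfold rho; rfl
end

section
/- Suppose the class set splits as I = I₁ ∪ I₂ with I₁ ∩ I₂ = ∅, both nonempty, and (⋃_{i∈I₁} 𝒦_i) ∩ (⋃_{i∈I₂} 𝒦_i) = ∅. Let Φ₁ and Φ₂ be the balance functions of the two subsystems (classes I₁ with servers ⋃_{i∈I₁} 𝒦_i, and classes I₂ with servers ⋃_{i∈I₂} 𝒦_i, with the same assignments and service rates). Then for every x ∈ ℕ^I, Φ(x) = Φ₁(x restricted to I₁) · Φ₂(x restricted to I₂). Consequently G(λ) = G₁(λ restricted to I₁) · G₂(λ restricted to I₂), and when these are finite, ψ = ψ₁ · ψ₂. -/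
open scoped BigOperators

lemma sum_update_lt {I : Type} [Fintype I] [DecidableEq I] (x : I → ℕ) (i : I) (hi : 0 < x i) :
    ∑ j, Function.update x i (x i - 1) j < ∑ j, x j := by
  apply Finset.sum_lt_sum
  · intro j _
    rcases eq_or_ne j i with rfl | h
    · simp [Function.update_self]
    · rw [Function.update_of_ne h]
  · exact ⟨i, Finset.mem_univ i, by simp [Function.update_self]; omega⟩

lemma Phi_nonneg {I K : Type} [Fintype I] [DecidableEq I] [DecidableEq K]
    (μ : K → ℝ) (hμ : ∀ k, 0 ≤ μ k) (Ka : I → Finset K) (x : I → ℕ) :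
    0 ≤ Phi μ Ka x := by
  have key : ∀ n, ∀ x : I → ℕ, ∑ i, x i = n → 0 ≤ Phi μ Ka x := by
    intro n
    induction n using Nat.strong_induction_on with
    | _ n ih =>
      intro x hxn
      rw [Phi]
      split
      · norm_num
      · apply div_nonneg
        · apply Finset.sum_nonneg
          intro i _
          have hi := i.2
          simp only [Finset.mem_filter] at hi
          exact ih _ (hxn ▸ sum_update_lt x i.1 hi.2) _ rfl
        · exact Finset.sum_nonneg fun k _ => hμ k
  exact key _ x rfl

lemma Phi_balance {I K : Type} [Fintype I] [DecidableEq I] [DecidableEq K]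
    (μ : K → ℝ) (hμ : ∀ k, 0 < μ k) (Ka : I → Finset K) (hKa : ∀ i, (Ka i).Nonempty)
    (x : I → ℕ) :
    (∑ k ∈ (Finset.univ.filter (fun i => 0 < x i)).biUnion Ka, μ k) * Phi μ Ka x
      = ∑ i ∈ Finset.univ.filter (fun i => 0 < x i),
          Phi μ Ka (Function.update x i (x i - 1)) := by
  rcases eq_or_ne x (fun _ => 0) with h | h
  · subst h; simp
  · have hM : 0 < ∑ k ∈ (Finset.univ.filter (fun i => 0 < x i)).biUnion Ka, μ k := by
      obtain ⟨i, hi⟩ : ∃ i, x i ≠ 0 := by rwa [Function.ne_iff] at h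
      apply Finset.sum_pos (fun k _ => hμ k)
      obtain ⟨k, hk⟩ := hKa i
      exact ⟨k, Finset.mem_biUnion.2
        ⟨i, Finset.mem_filter.2 ⟨Finset.mem_univ i, Nat.pos_of_ne_zero hi⟩, hk⟩⟩
    rw [Phi, if_neg h, Finset.sum_attach _ (fun i => Phi μ Ka (Function.update x i (x i - 1))), mul_comm, div_mul_cancel₀ _ hM.ne']

lemma Phi_factor {I₁ I₂ K : Type} [Fintype I₁] [DecidableEq I₁]
    [Fintype I₂] [DecidableEq I₂] [DecidableEq K]
    (μ : K → ℝ) (hμ : ∀ k, 0 < μ k)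
    (Ka : I₁ ⊕ I₂ → Finset K) (hKa : ∀ i, (Ka i).Nonempty)
    (hdisj : Disjoint (Finset.univ.biUnion (fun i : I₁ => Ka (Sum.inl i)))
                      (Finset.univ.biUnion (fun i : I₂ => Ka (Sum.inr i)))) :
    ∀ x : I₁ ⊕ I₂ → ℕ,
      Phi μ Ka x =
        Phi μ (fun i : I₁ => Ka (Sum.inl i)) (fun i => x (Sum.inl i)) *
          Phi μ (fun i : I₂ => Ka (Sum.inr i)) (fun i => x (Sum.inr i)) := by
  have key : ∀ n, ∀ x : I₁ ⊕ I₂ → ℕ, ∑ i, x i = n →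
      Phi μ Ka x =
        Phi μ (fun i : I₁ => Ka (Sum.inl i)) (fun i => x (Sum.inl i)) *
          Phi μ (fun i : I₂ => Ka (Sum.inr i)) (fun i => x (Sum.inr i)) := by
    intro n
    induction n using Nat.strong_induction_on with
    | _ n ih =>
      intro x hxn
      set y : I₁ → ℕ := fun i => x (Sum.inl i) with hy
      set z : I₂ → ℕ := fun i => x (Sum.inr i) with hz
      rcases eq_or_ne x (fun _ => 0) with h0 | h0
      · have hy0 : y = fun _ => 0 := by funext i; simp [hy, h0]
        have hz0 : z = fun _ => 0 := by funext i; simp [hz, h0]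
        rw [Phi, if_pos h0, Phi, if_pos hy0, Phi, if_pos hz0]
        norm_num
      · -- notation
        set S₁ : Finset I₁ := Finset.univ.filter (fun i => 0 < y i) with hS₁
        set S₂ : Finset I₂ := Finset.univ.filter (fun i => 0 < z i) with hS₂
        set MA : ℝ := ∑ k ∈ S₁.biUnion (fun i => Ka (Sum.inl i)), μ k with hMA
        set MB : ℝ := ∑ k ∈ S₂.biUnion (fun i => Ka (Sum.inr i)), μ k with hMB
        -- denominator splits
        have hU : (Finset.univ.filter (fun i : I₁ ⊕ I₂ => 0 < x i)).biUnion Ka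
            = S₁.biUnion (fun i => Ka (Sum.inl i)) ∪ S₂.biUnion (fun i => Ka (Sum.inr i)) := by
          ext k
          simp only [Finset.mem_biUnion, Finset.mem_union, Finset.mem_filter, Finset.mem_univ,
            true_and, hS₁, hS₂]
          constructor
          · rintro ⟨i, hi, hk⟩
            cases i with
            | inl a => exact Or.inl ⟨a, hi, hk⟩
            | inr b => exact Or.inr ⟨b, hi, hk⟩
          · rintro (⟨a, ha, hk⟩ | ⟨b, hb, hk⟩)
            exacts [⟨Sum.inl a, ha, hk⟩, ⟨Sum.inr b, hb, hk⟩]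
        have hdisj' : Disjoint (S₁.biUnion (fun i => Ka (Sum.inl i)))
            (S₂.biUnion (fun i => Ka (Sum.inr i))) := by
          apply hdisj.mono <;>
            exact Finset.biUnion_subset_biUnion_of_subset_left _ (Finset.subset_univ _)
        have hMsplit : (∑ k ∈ (Finset.univ.filter (fun i : I₁ ⊕ I₂ => 0 < x i)).biUnion Ka, μ k)
            = MA + MB := by
          rw [hU, Finset.sum_union hdisj']
        -- numerator splits, with IH applied
        have e1 : ∀ (i : I₁) (v : ℕ),
            (fun a => Function.update x (Sum.inl i) v (Sum.inl a)) = Function.update y i v := by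
          intro i v; funext a
          rcases eq_or_ne a i with rfl | hne
          · simp [hy]
          · rw [Function.update_of_ne (fun h => hne (Sum.inl.inj h)),
              Function.update_of_ne hne]
        have e2 : ∀ (i : I₁) (v : ℕ),
            (fun b => Function.update x (Sum.inl i) v (Sum.inr b)) = z := by
          intro i v; funext b; rw [Function.update_of_ne (by simp)]
        have e3 : ∀ (i : I₂) (v : ℕ),
            (fun a => Function.update x (Sum.inr i) v (Sum.inl a)) = y := by
          intro i v; funext a; rw [Function.update_of_ne (by simp)]
        have e4 : ∀ (i : I₂) (v : ℕ),
            (fun b => Function.update x (Sum.inr i) v (Sum.inr b)) = Function.update z i v := by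
          intro i v; funext b
          rcases eq_or_ne b i with rfl | hne
          · simp [hz]
          · rw [Function.update_of_ne (fun h => hne (Sum.inr.inj h)),
              Function.update_of_ne hne]
        have hupd1 : ∀ i : I₁, 0 < x (Sum.inl i) →
            Phi μ Ka (Function.update x (Sum.inl i) (x (Sum.inl i) - 1))
              = Phi μ (fun i : I₁ => Ka (Sum.inl i)) (Function.update y i (y i - 1))
                * Phi μ (fun i : I₂ => Ka (Sum.inr i)) z := by
          intro i hi
          rw [ih _ (hxn ▸ sum_update_lt x (Sum.inl i) hi) _ rfl, e1, e2]
        have hupd2 : ∀ i : I₂, 0 < x (Sum.inr i) →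
            Phi μ Ka (Function.update x (Sum.inr i) (x (Sum.inr i) - 1))
              = Phi μ (fun i : I₁ => Ka (Sum.inl i)) y
                * Phi μ (fun i : I₂ => Ka (Sum.inr i)) (Function.update z i (z i - 1)) := by
          intro i hi
          rw [ih _ (hxn ▸ sum_update_lt x (Sum.inr i) hi) _ rfl, e3, e4]
        have hNsplit : (∑ i ∈ Finset.univ.filter (fun i : I₁ ⊕ I₂ => 0 < x i),
              Phi μ Ka (Function.update x i (x i - 1)))
            = (∑ i ∈ S₁, Phi μ (fun i : I₁ => Ka (Sum.inl i)) (Function.update y i (y i - 1)))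
                * Phi μ (fun i : I₂ => Ka (Sum.inr i)) z
              + Phi μ (fun i : I₁ => Ka (Sum.inl i)) y
                * (∑ i ∈ S₂, Phi μ (fun i : I₂ => Ka (Sum.inr i))
                    (Function.update z i (z i - 1))) := by
          rw [Finset.sum_filter, Fintype.sum_sum_type, ← Finset.sum_filter, ← Finset.sum_filter,
            Finset.sum_mul, Finset.mul_sum]
          congr 1
          · exact Finset.sum_congr rfl fun i hi =>
              hupd1 i (Finset.mem_filter.1 hi).2
          · exact Finset.sum_congr rfl fun i hi =>
              hupd2 i (Finset.mem_filter.1 hi).2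
        -- balance for subsystems
        have hbal1 := Phi_balance μ hμ (fun i : I₁ => Ka (Sum.inl i)) (fun i => hKa _) y
        have hbal2 := Phi_balance μ hμ (fun i : I₂ => Ka (Sum.inr i)) (fun i => hKa _) z
        rw [← hS₁, ← hMA] at hbal1
        rw [← hS₂, ← hMB] at hbal2
        -- positivity of MA + MB
        have hMA0 : 0 ≤ MA := Finset.sum_nonneg fun k _ => (hμ k).le
        have hMB0 : 0 ≤ MB := Finset.sum_nonneg fun k _ => (hμ k).le
        have hMpos : 0 < MA + MB := by
          obtain ⟨i, hi⟩ : ∃ i, x i ≠ 0 := by rwa [Function.ne_iff] at h0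
          cases i with
          | inl a =>
            have : 0 < MA := by
              apply Finset.sum_pos (fun k _ => hμ k)
              obtain ⟨k, hk⟩ := hKa (Sum.inl a)
              exact ⟨k, Finset.mem_biUnion.2 ⟨a,
                Finset.mem_filter.2 ⟨Finset.mem_univ a, Nat.pos_of_ne_zero hi⟩, hk⟩⟩
            linarith
          | inr b =>
            have : 0 < MB := by
              apply Finset.sum_pos (fun k _ => hμ k)
              obtain ⟨k, hk⟩ := hKa (Sum.inr b)
              exact ⟨k, Finset.mem_biUnion.2 ⟨b,
                Finset.mem_filter.2 ⟨Finset.mem_univ b, Nat.pos_of_ne_zero hi⟩, hk⟩⟩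
            linarith
        rw [Phi, if_neg h0,
          Finset.sum_attach _ (fun i => Phi μ Ka (Function.update x i (x i - 1))),
          hNsplit, hMsplit, ← hbal1, ← hbal2, div_eq_iff hMpos.ne']
        ring
  intro x; exact key _ x rfl

set_option maxHeartbeats 4000000 in
/-- If the class set splits as `I = I₁ ⊕ I₂` with disjoint used server
sets, then the balance function factorizes, `Φ(x) = Φ₁(x|I₁) Φ₂(x|I₂)`; consequently
`G(λ) = G₁(λ|I₁) G₂(λ|I₂)` (in `[0,∞]`) and, when these are finite, `ψ = ψ₁ ψ₂`. -/
theorem independent_subsystems_factorization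
    {I₁ I₂ K : Type} [Fintype I₁] [DecidableEq I₁] [Nonempty I₁]
    [Fintype I₂] [DecidableEq I₂] [Nonempty I₂]
    [Fintype K] [DecidableEq K] [Nonempty K]
    (μ : K → ℝ) (hμ : ∀ k, 0 < μ k)
    (Ka : I₁ ⊕ I₂ → Finset K) (hKa : ∀ i, (Ka i).Nonempty)
    (hcov : ∀ k, ∃ i, k ∈ Ka i)
    (lam : I₁ ⊕ I₂ → ℝ) (hlam : ∀ i, 0 ≤ lam i)
    (hdisj : Disjoint (Finset.univ.biUnion (fun i : I₁ => Ka (Sum.inl i)))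
                      (Finset.univ.biUnion (fun i : I₂ => Ka (Sum.inr i)))) :
    (∀ x : I₁ ⊕ I₂ → ℕ,
      Phi μ Ka x =
        Phi μ (fun i : I₁ => Ka (Sum.inl i)) (fun i => x (Sum.inl i)) *
          Phi μ (fun i : I₂ => Ka (Sum.inr i)) (fun i => x (Sum.inr i))) ∧
    (∑' x : I₁ ⊕ I₂ → ℕ, ENNReal.ofReal (Phi μ Ka x * ∏ i, lam i ^ x i)) =
      (∑' x₁ : I₁ → ℕ, ENNReal.ofReal
          (Phi μ (fun i : I₁ => Ka (Sum.inl i)) x₁ * ∏ i, lam (Sum.inl i) ^ x₁ i)) *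
      (∑' x₂ : I₂ → ℕ, ENNReal.ofReal
          (Phi μ (fun i : I₂ => Ka (Sum.inr i)) x₂ * ∏ i, lam (Sum.inr i) ^ x₂ i)) ∧
    (Summable (fun x₁ : I₁ → ℕ =>
        Phi μ (fun i : I₁ => Ka (Sum.inl i)) x₁ * ∏ i, lam (Sum.inl i) ^ x₁ i) →
      Summable (fun x₂ : I₂ → ℕ =>
        Phi μ (fun i : I₂ => Ka (Sum.inr i)) x₂ * ∏ i, lam (Sum.inr i) ^ x₂ i) →
      (∑' x : I₁ ⊕ I₂ → ℕ, Phi μ Ka x * ∏ i, lam i ^ x i)⁻¹ =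
        (∑' x₁ : I₁ → ℕ,
          Phi μ (fun i : I₁ => Ka (Sum.inl i)) x₁ * ∏ i, lam (Sum.inl i) ^ x₁ i)⁻¹ *
        (∑' x₂ : I₂ → ℕ,
          Phi μ (fun i : I₂ => Ka (Sum.inr i)) x₂ * ∏ i, lam (Sum.inr i) ^ x₂ i)⁻¹) := by
  have hfac := Phi_factor μ hμ Ka hKa hdisj
  obtain ⟨g₁, hg₁'⟩ : ∃ g : (I₁ → ℕ) → ℝ, ∀ x₁,
      Phi μ (fun i : I₁ => Ka (Sum.inl i)) x₁ * ∏ i, lam (Sum.inl i) ^ x₁ i = g x₁ :=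
    ⟨_, fun _ => rfl⟩
  obtain ⟨g₂, hg₂'⟩ : ∃ g : (I₂ → ℕ) → ℝ, ∀ x₂,
      Phi μ (fun i : I₂ => Ka (Sum.inr i)) x₂ * ∏ i, lam (Sum.inr i) ^ x₂ i = g x₂ :=
    ⟨_, fun _ => rfl⟩
  have hg1 : ∀ x₁, 0 ≤ g₁ x₁ := fun x₁ => (hg₁' x₁) ▸
    mul_nonneg (Phi_nonneg _ (fun k => (hμ k).le) _ _)
      (Finset.prod_nonneg fun i _ => pow_nonneg (hlam _) _)
  have hg2 : ∀ x₂, 0 ≤ g₂ x₂ := fun x₂ => (hg₂' x₂) ▸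
    mul_nonneg (Phi_nonneg _ (fun k => (hμ k).le) _ _)
      (Finset.prod_nonneg fun i _ => pow_nonneg (hlam _) _)
  have hpoint : ∀ x : I₁ ⊕ I₂ → ℕ,
      Phi μ Ka x * ∏ i, lam i ^ x i
        = g₁ (fun i => x (Sum.inl i)) * g₂ (fun i => x (Sum.inr i)) := by
    intro x
    rw [← hg₁', ← hg₂', hfac x, Fintype.prod_sum_type]
    ring
  have hpointp : ∀ p : (I₁ → ℕ) × (I₂ → ℕ),
      Phi μ Ka ((Equiv.sumArrowEquivProdArrow I₁ I₂ ℕ).symm p)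
          * ∏ i, lam i ^ ((Equiv.sumArrowEquivProdArrow I₁ I₂ ℕ).symm p) i
        = g₁ p.1 * g₂ p.2 := fun p => hpoint _
  refine ⟨hfac, ?_, ?_⟩
  · simp only [hg₁', hg₂']
    rw [← ((Equiv.sumArrowEquivProdArrow I₁ I₂ ℕ).symm).tsum_eq
      (fun x => ENNReal.ofReal (Phi μ Ka x * ∏ i, lam i ^ x i))]
    have key : ∀ p : (I₁ → ℕ) × (I₂ → ℕ),
        ENNReal.ofReal (Phi μ Ka ((Equiv.sumArrowEquivProdArrow I₁ I₂ ℕ).symm p)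
            * ∏ i, lam i ^ ((Equiv.sumArrowEquivProdArrow I₁ I₂ ℕ).symm p) i)
          = ENNReal.ofReal (g₁ p.1) * ENNReal.ofReal (g₂ p.2) := by
      intro p
      rw [hpointp p, ENNReal.ofReal_mul (hg1 _)]
    rw [tsum_congr key,
      ENNReal.tsum_prod (f := fun a b => ENNReal.ofReal (g₁ a) * ENNReal.ofReal (g₂ b))]
    simp_rw [ENNReal.tsum_mul_left]
    rw [ENNReal.tsum_mul_right]
  · intro hs1 hs2
    simp only [hg₁'] at hs1
    simp only [hg₂'] at hs2
    have hprod : Summable (fun p : (I₁ → ℕ) × (I₂ → ℕ) => g₁ p.1 * g₂ p.2) :=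
      hs1.mul_of_nonneg hs2 hg1 hg2
    have h1 : (∑' x : I₁ ⊕ I₂ → ℕ, Phi μ Ka x * ∏ i, lam i ^ x i)
        = ∑' p : (I₁ → ℕ) × (I₂ → ℕ), g₁ p.1 * g₂ p.2 :=
      (((Equiv.sumArrowEquivProdArrow I₁ I₂ ℕ).symm).tsum_eq
        (fun x => Phi μ Ka x * ∏ i, lam i ^ x i)).symm.trans (tsum_congr hpointp)
    have h2 : (∑' p : (I₁ → ℕ) × (I₂ → ℕ), g₁ p.1 * g₂ p.2)
        = (∑' x₁, g₁ x₁) * (∑' x₂, g₂ x₂) := by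
      refine (Summable.tsum_prod' hprod (fun a => hs2.mul_left (g₁ a))).trans ?_
      simp_rw [tsum_mul_left]
      exact tsum_mul_right
    simp only [hg₁', hg₂']
    rw [h1, h2, mul_inv]
end
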